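/- Let X and Y be integrable real-valued random variables on a probability space. Then E[c(X)] ≤ E[c(Y)] holds for every nondecreasing convex function c: ℝ → ℝ such that c(X) and c(Y) are integrable, if and only if E[(X−K)⁺] ≤ E[(Y−K)⁺] for every K ∈ ℝ. -/

import Mathlib

open MeasureTheory Set Filter Topology

namespace MCOaux

/-- Sum of call options part. -/
noncomputable def callSum (l : List (ℝ × ℝ)) (x : ℝ) : ℝ :=
  (l.map (fun p => p.1 * max (x - p.2) 0)).sum

lemma callSum_nil (x : ℝ) : callSum [] x = 0 := rfl

lemma callSum_cons (p : ℝ × ℝ) (l : List (ℝ × ℝ)) (x : ℝ) :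
    callSum (p :: l) x = p.1 * max (x - p.2) 0 + callSum l x := by
  simp [callSum]

lemma callSum_append (l₁ l₂ : List (ℝ × ℝ)) (x : ℝ) :
    callSum (l₁ ++ l₂) x = callSum l₁ x + callSum l₂ x := by
  simp [callSum]

/-- `repFun a b l` is the function `x ↦ a + b x + ∑ cᵢ (x - Kᵢ)⁺`. -/
noncomputable def repFun (a b : ℝ) (l : List (ℝ × ℝ)) (x : ℝ) : ℝ :=
  a + b * x + callSum l x

/-- `Rep f s` : `f` has a call representation with total slope at most `s`. -/
def Rep (f : ℝ → ℝ) (s : ℝ) : Prop :=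
  ∃ a b l, 0 ≤ b ∧ (∀ p ∈ l, 0 ≤ p.1) ∧ b + (l.map Prod.fst).sum ≤ s ∧
    ∀ x, f x = repFun a b l x

lemma Rep.mono {f : ℝ → ℝ} {s s' : ℝ} (h : Rep f s) (hss : s ≤ s') : Rep f s' := by
  obtain ⟨a, b, l, hb, hl, hsum, hfx⟩ := h
  exact ⟨a, b, l, hb, hl, hsum.trans hss, hfx⟩

lemma Rep.congr {f g : ℝ → ℝ} {s : ℝ} (h : Rep f s) (hfg : ∀ x, g x = f x) : Rep g s := by
  obtain ⟨a, b, l, hb, hl, hsum, hfx⟩ := h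
  exact ⟨a, b, l, hb, hl, hsum, fun x => (hfg x).trans (hfx x)⟩

lemma sum_fst_nonneg {l : List (ℝ × ℝ)} (hl : ∀ p ∈ l, 0 ≤ p.1) :
    0 ≤ (l.map Prod.fst).sum := by
  induction l with
  | nil => simp
  | cons p l ih =>
    simp only [List.map_cons, List.sum_cons]
    have := hl p (List.mem_cons_self)
    have := ih (fun q hq => hl q (List.mem_cons_of_mem _ hq))
    linarith

lemma filter_sum_fst_le {l : List (ℝ × ℝ)} (P : ℝ × ℝ → Bool) (hl : ∀ p ∈ l, 0 ≤ p.1) :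
    ((l.filter P).map Prod.fst).sum ≤ (l.map Prod.fst).sum := by
  induction l with
  | nil => simp
  | cons p l ih =>
    have h1 := hl p (List.mem_cons_self)
    have h2 := ih (fun q hq => hl q (List.mem_cons_of_mem _ hq))
    by_cases hp : P p
    · simp only [List.filter_cons, hp, List.map_cons, List.sum_cons, if_true]
      linarith
    · simp only [List.filter_cons, hp, List.map_cons, List.sum_cons, Bool.false_eq_true,
        if_false]
      linarith

lemma callSum_sub_le {l : List (ℝ × ℝ)} (hl : ∀ p ∈ l, 0 ≤ p.1) {x y : ℝ} (hxy : x ≤ y) :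
    callSum l y - callSum l x ≤ (l.map Prod.fst).sum * (y - x) := by
  induction l with
  | nil => simp [callSum_nil]
  | cons p l ih =>
    have h1 := hl p (List.mem_cons_self)
    have h2 := ih (fun q hq => hl q (List.mem_cons_of_mem _ hq))
    have hcall : max (y - p.2) 0 - max (x - p.2) 0 ≤ y - x := by
      rcases le_total (x - p.2) 0 with h | h
      · rcases le_total (y - p.2) 0 with h' | h'
        · simp [max_eq_right h, max_eq_right h']; linarith
        · simp [max_eq_left h', max_eq_right h]; linarith
      · simp [max_eq_left h, max_eq_left ((by linarith : (0:ℝ) ≤ y - p.2))]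
    simp only [callSum_cons, List.map_cons, List.sum_cons]
    nlinarith [mul_le_mul_of_nonneg_left hcall h1]

lemma callSum_nonneg_sub (l : List (ℝ × ℝ)) (hl : ∀ p ∈ l, 0 ≤ p.1) {x y : ℝ} (hxy : x ≤ y) :
    callSum l x ≤ callSum l y := by
  induction l with
  | nil => simp [callSum_nil]
  | cons p l ih =>
    have h1 := hl p (List.mem_cons_self)
    have h2 := ih (fun q hq => hl q (List.mem_cons_of_mem _ hq))
    simp only [callSum_cons]
    have : max (x - p.2) 0 ≤ max (y - p.2) 0 := max_le_max (by linarith) le_rfl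
    nlinarith

lemma continuous_callSum (l : List (ℝ × ℝ)) : Continuous (callSum l) := by
  induction l with
  | nil => exact continuous_const.congr fun x => (callSum_nil x).symm
  | cons p l ih =>
    have : Continuous fun x => p.1 * max (x - p.2) 0 :=
      (continuous_const.mul ((continuous_id.sub continuous_const).max continuous_const))
    exact (this.add ih).congr fun x => (callSum_cons p l x).symm

lemma continuous_repFun (a b : ℝ) (l : List (ℝ × ℝ)) : Continuous (repFun a b l) :=
  (continuous_const.add (continuous_const.mul continuous_id)).add (continuous_callSum l)

lemma callSum_filter_of_le {l : List (ℝ × ℝ)} {K x : ℝ} (hx : x ≤ K) :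
    callSum l x = callSum (l.filter (fun p => decide (p.2 < K))) x := by
  induction l with
  | nil => simp [callSum_nil]
  | cons p l ih =>
    by_cases hp : p.2 < K
    · simp only [List.filter_cons, hp, decide_true, if_true, callSum_cons, ih]
    · have hz : max (x - p.2) 0 = 0 := max_eq_right (by push_neg at hp; linarith)
      simp only [List.filter_cons, hp, decide_false, if_false, callSum_cons, hz, ih]
      simp

lemma callSum_of_all_le {l : List (ℝ × ℝ)} {K x : ℝ} (hK : ∀ p ∈ l, p.2 ≤ K) (hx : K ≤ x) :
    callSum l x = callSum l K + (l.map Prod.fst).sum * (x - K) := by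
  induction l with
  | nil => simp [callSum_nil]
  | cons p l ih =>
    have h1 := hK p (List.mem_cons_self)
    have h2 := ih (fun q hq => hK q (List.mem_cons_of_mem _ hq))
    have hx' : max (x - p.2) 0 = x - p.2 := max_eq_left (by linarith)
    have hK' : max (K - p.2) 0 = K - p.2 := max_eq_left (by linarith)
    simp only [callSum_cons, List.map_cons, List.sum_cons, hx', hK', h2]
    ring


/-- Key step: taking the max with a line whose slope dominates the total slope
of a representation stays representable. -/
lemma rep_max_line {h : ℝ → ℝ} {s : ℝ} (hrep : Rep h s) (A B : ℝ) (hB : s ≤ B) :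
    Rep (fun x => max (A + B * x) (h x)) B := by
  obtain ⟨a, b, l, hb, hl, hsum, hfx⟩ := hrep
  have hSig0 : 0 ≤ (l.map Prod.fst).sum := sum_fst_nonneg hl
  have hB0 : 0 ≤ B := by linarith
  -- ψ x = line - h is monotone
  have hψ : ∀ x y : ℝ, x ≤ y →
      (A + B * x) - repFun a b l x ≤ (A + B * y) - repFun a b l y := by
    intro x y hxy
    have := callSum_sub_le hl hxy
    have hby : b * y - b * x = b * (y - x) := by ring
    have hsx : (l.map Prod.fst).sum * (y - x) ≤ (s - b) * (y - x) := by
      apply mul_le_mul_of_nonneg_right _ (by linarith)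
      linarith
    have hBsx : s * (y - x) ≤ B * (y - x) :=
      mul_le_mul_of_nonneg_right hB (by linarith)
    simp only [repFun] at *
    nlinarith
  by_cases h1 : ∀ x, A + B * x ≤ h x
  · refine ⟨a, b, l, hb, hl, hsum.trans hB, fun x => ?_⟩
    change max (A + B * x) (h x) = _
    rw [max_eq_right (h1 x), hfx x]
  push_neg at h1
  obtain ⟨x₀, hx₀⟩ := h1
  set S : Set ℝ := {x | h x < A + B * x} with hS
  have hSne : S.Nonempty := ⟨x₀, hx₀⟩
  by_cases h2 : BddBelow S
  · set K := sInf S with hK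
    have hK1 : ∀ x, K < x → h x < A + B * x := by
      intro x hx
      obtain ⟨y, hyS, hyx⟩ := (csInf_lt_iff h2 hSne).mp hx
      have hw := hψ y x hyx.le
      have hyS' : h y < A + B * y := hyS
      rw [hfx y] at hyS'
      rw [hfx x]
      linarith
    have hK2 : ∀ x, x < K → A + B * x ≤ h x := by
      intro x hx
      by_contra hcon
      push_neg at hcon
      exact absurd (csInf_le h2 (by exact hcon : x ∈ S)) (by linarith)
    have hcont : Continuous fun x => (A + B * x) - repFun a b l x :=
      (continuous_const.add (continuous_const.mul continuous_id)).sub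
        (continuous_repFun a b l)
    have hseq1 : Tendsto (fun n : ℕ => K - 1 / (n + 1)) atTop (𝓝 K) := by
      simpa using tendsto_const_nhds.sub (tendsto_one_div_add_atTop_nhds_zero_nat (𝕜 := ℝ))
    have hseq2 : Tendsto (fun n : ℕ => K + 1 / (n + 1)) atTop (𝓝 K) := by
      simpa using tendsto_const_nhds.add (tendsto_one_div_add_atTop_nhds_zero_nat (𝕜 := ℝ))
    have hK3 : A + B * K = h K := by
      have hle : (A + B * K) - repFun a b l K ≤ 0 := by
        refine le_of_tendsto ((hcont.tendsto K).comp hseq1) ?_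
        refine Eventually.of_forall fun n => ?_
        have hlt : K - 1 / (n + 1 : ℝ) < K := by
          have : (0:ℝ) < 1 / (n + 1) := by positivity
          linarith
        have hw := hK2 _ hlt
        rw [hfx _] at hw
        show A + B * (K - 1 / (n + 1 : ℝ)) - repFun a b l (K - 1 / (n + 1 : ℝ)) ≤ 0
        linarith
      have hge : 0 ≤ (A + B * K) - repFun a b l K := by
        refine ge_of_tendsto ((hcont.tendsto K).comp hseq2) ?_
        refine Eventually.of_forall fun n => ?_
        have hlt : K < K + 1 / (n + 1 : ℝ) := by
          have : (0:ℝ) < 1 / (n + 1) := by positivity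
          linarith
        have hw := hK1 _ hlt
        rw [hfx _] at hw
        show 0 ≤ A + B * (K + 1 / (n + 1 : ℝ)) - repFun a b l (K + 1 / (n + 1 : ℝ))
        linarith
      rw [hfx K]
      linarith
    -- the new representation
    set lf := l.filter (fun p => decide (p.2 < K)) with hlf
    set C := (lf.map Prod.fst).sum with hC
    have hCl : C ≤ (l.map Prod.fst).sum := filter_sum_fst_le _ hl
    have hC0 : 0 ≤ C := sum_fst_nonneg (fun p hp => hl p (List.mem_of_mem_filter hp))
    have hcoef : 0 ≤ B - b - C := by linarith
    refine ⟨a, b, lf ++ [(B - b - C, K)], hb, ?_, ?_, ?_⟩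
    · intro p hp
      rcases List.mem_append.mp hp with hp | hp
      · exact hl p (List.mem_of_mem_filter hp)
      · simp only [List.mem_singleton] at hp
        rw [hp]
        exact hcoef
    · simp only [List.map_append, List.sum_append, List.map_cons, List.map_nil,
        List.sum_cons, List.sum_nil]
      simp only [← hC]
      linarith
    · intro x
      change max (A + B * x) (h x) = _
      have hKmem : ∀ p ∈ lf, p.2 < K := by
        intro p hp
        have := List.of_mem_filter hp
        simpa using this
      rcases le_total x K with hxK | hxK
      · have hmax : max (A + B * x) (h x) = h x := by
        -- line ≤ h on x ≤ K
          apply max_eq_right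
          have := hψ x K hxK
          rw [hfx K] at hK3
          rw [hfx x]
          linarith
        rw [hmax, hfx x]
        simp only [repFun]
        rw [callSum_append, callSum_filter_of_le hxK, ← hlf]
        have : callSum [(B - b - C, K)] x = 0 := by
          simp [callSum, max_eq_right (by linarith : x - K ≤ 0)]
        rw [this]
        ring
      · have hmax : max (A + B * x) (h x) = A + B * x := by
          apply max_eq_left
          have := hψ K x hxK
          rw [hfx K] at hK3
          rw [hfx x]
          linarith
        rw [hmax]
        simp only [repFun]
        rw [callSum_append]
        have hsingle : callSum [(B - b - C, K)] x = (B - b - C) * (x - K) := by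
          simp [callSum, max_eq_left (by linarith : (0:ℝ) ≤ x - K)]
        rw [hsingle, callSum_of_all_le (fun p hp => (hKmem p hp).le) hxK]
        -- value at K
        have hvalK : A + B * K = a + b * K + callSum lf K := by
          rw [hfx K] at hK3
          simp only [repFun] at hK3
          rw [callSum_filter_of_le le_rfl, ← hlf] at hK3
          linarith
        simp only [← hC]
        linarith [hvalK]
  · -- not bounded below: the line dominates everywhere
    have hall : ∀ x, h x ≤ A + B * x := by
      intro x
      obtain ⟨y, hyS, hyx⟩ := not_bddBelow_iff.mp h2 x
      have hw := hψ y x hyx.le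
      have hyS' : h y < A + B * y := hyS
      rw [hfx y] at hyS'
      rw [hfx x]
      linarith
    refine ⟨A, B, [], hB0, by simp, by simp, fun x => ?_⟩
    change max (A + B * x) (h x) = _
    rw [max_eq_left (hall x)]
    simp [repFun, callSum_nil]

/-- A finite sup of nondecreasing affine functions is representable. -/
lemma rep_sup' {ι : Type*} : ∀ (s : Finset ι) (hs : s.Nonempty) (A B : ι → ℝ),
    (∀ i ∈ s, 0 ≤ B i) → ∀ Bbd : ℝ, (∀ i ∈ s, B i ≤ Bbd) →
    Rep (fun x => s.sup' hs (fun i => A i + B i * x)) Bbd := by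
  intro s
  induction s using Finset.strongInduction with
  | _ s ih =>
    intro hs A B h0 Bbd hB
    classical
    obtain ⟨p, hp, hpmax⟩ := Finset.exists_max_image s B hs
    set t := s.erase p with ht
    by_cases htne : t.Nonempty
    · have hsub : t ⊂ s := Finset.erase_ssubset hp
      have IH := ih t hsub htne A B
        (fun q hq => h0 q (Finset.mem_of_mem_erase hq)) (B p)
        (fun q hq => hpmax q (Finset.mem_of_mem_erase hq))
      have hmax := rep_max_line IH (A p) (B p) le_rfl
      have heq : ∀ x, s.sup' hs (fun i => A i + B i * x) =
          max (A p + B p * x) (t.sup' htne (fun i => A i + B i * x)) := by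
        intro x
        apply le_antisymm
        · apply Finset.sup'_le
          intro q hq
          by_cases hqp : q = p
          · subst hqp; exact le_max_left _ _
          · exact le_trans (Finset.le_sup' (f := fun i => A i + B i * x)
              (Finset.mem_erase.mpr ⟨hqp, hq⟩)) (le_max_right _ _)
        · apply max_le
          · exact Finset.le_sup' (f := fun i => A i + B i * x) hp
          · exact Finset.sup'_le _ _ fun q hq =>
              Finset.le_sup' (f := fun i => A i + B i * x) (Finset.mem_of_mem_erase hq)
      exact (hmax.congr heq).mono (hB p hp)
    · have hsingle : ∀ q ∈ s, q = p := by
        intro q hq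
        by_contra hqp
        exact htne ⟨q, Finset.mem_erase.mpr ⟨hqp, hq⟩⟩
      have heq : ∀ x, s.sup' hs (fun i => A i + B i * x) = A p + B p * x := by
        intro x
        apply le_antisymm
        · exact Finset.sup'_le _ _ fun q hq => by rw [hsingle q hq]
        · exact Finset.le_sup' (f := fun i => A i + B i * x) hp
      refine ⟨A p, B p, [], h0 p hp, by simp, by simpa using hB p hp, fun x => ?_⟩
      simp only [heq x]; simp [repFun, callSum_nil]


section Prob

variable {Ω : Type*} [MeasureSpace Ω] [IsProbabilityMeasure (volume : Measure Ω)]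

lemma integrable_call {X : Ω → ℝ} (hX : Integrable X) (K : ℝ) :
    Integrable (fun ω => max (X ω - K) 0) :=
  (hX.sub (integrable_const K)).pos_part

lemma integrable_repFun {X : Ω → ℝ} (hX : Integrable X) (a b : ℝ) (l : List (ℝ × ℝ)) :
    Integrable (fun ω => repFun a b l (X ω)) := by
  induction l with
  | nil =>
    have h : (fun ω => repFun a b [] (X ω)) = fun ω => a + b * X ω := by
      funext ω; simp [repFun, callSum_nil]
    rw [h]
    exact (integrable_const a).add (hX.const_mul b)
  | cons p l ih =>
    have h : (fun ω => repFun a b (p :: l) (X ω)) =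
        fun ω => repFun a b l (X ω) + p.1 * max (X ω - p.2) 0 := by
      funext ω; simp only [repFun, callSum_cons]; ring
    rw [h]
    exact ih.add ((integrable_call hX p.2).const_mul p.1)

lemma Rep.integrable {f : ℝ → ℝ} {s : ℝ} (hf : Rep f s) {X : Ω → ℝ} (hX : Integrable X) :
    Integrable (fun ω => f (X ω)) := by
  obtain ⟨a, b, l, -, -, -, hfx⟩ := hf
  have h : (fun ω => f (X ω)) = fun ω => repFun a b l (X ω) := funext fun ω => hfx (X ω)
  rw [h]; exact integrable_repFun hX a b l

lemma integral_repFun {X : Ω → ℝ} (hX : Integrable X) (a b : ℝ) (l : List (ℝ × ℝ)) :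
    ∫ ω, repFun a b l (X ω) =
      a + b * (∫ ω, X ω) + (l.map (fun p => p.1 * ∫ ω, max (X ω - p.2) 0)).sum := by
  induction l with
  | nil =>
    have h : (fun ω => repFun a b [] (X ω)) = fun ω => a + b * X ω := by
      funext ω; simp [repFun, callSum_nil]
    rw [h]
    have h2 : ∫ ω, (a + b * X ω) = (∫ _ω : Ω, a) + ∫ ω, b * X ω :=
      integral_add (integrable_const a) (hX.const_mul b)
    rw [h2, integral_const, integral_const_mul]
    simp
  | cons p l ih =>
    have h : (fun ω => repFun a b (p :: l) (X ω)) =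
        fun ω => repFun a b l (X ω) + p.1 * max (X ω - p.2) 0 := by
      funext ω; simp only [repFun, callSum_cons]; ring
    rw [h]
    have h2 : ∫ ω, (repFun a b l (X ω) + p.1 * max (X ω - p.2) 0) =
        (∫ ω, repFun a b l (X ω)) + ∫ ω, p.1 * max (X ω - p.2) 0 :=
      integral_add (integrable_repFun hX a b l)
        ((integrable_call hX p.2).const_mul p.1)
    rw [h2, ih, integral_const_mul]
    simp only [List.map_cons, List.sum_cons]
    ring

lemma rep_integral_le {X Y : Ω → ℝ} (hX : Integrable X) (hY : Integrable Y)
    (hEXY : ∫ ω, X ω ≤ ∫ ω, Y ω)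
    (hcall : ∀ K : ℝ, ∫ ω, max (X ω - K) 0 ≤ ∫ ω, max (Y ω - K) 0)
    {f : ℝ → ℝ} {s : ℝ} (hf : Rep f s) :
    ∫ ω, f (X ω) ≤ ∫ ω, f (Y ω) := by
  obtain ⟨a, b, l, hb, hl, -, hfx⟩ := hf
  have hfX : (fun ω => f (X ω)) = fun ω => repFun a b l (X ω) := funext fun ω => hfx (X ω)
  have hfY : (fun ω => f (Y ω)) = fun ω => repFun a b l (Y ω) := funext fun ω => hfx (Y ω)
  rw [hfX, hfY, integral_repFun hX a b l, integral_repFun hY a b l]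
  have hsum : ((l.map (fun p => p.1 * ∫ ω, max (X ω - p.2) 0))).sum ≤
      ((l.map (fun p => p.1 * ∫ ω, max (Y ω - p.2) 0))).sum := by
    apply List.sum_le_sum
    intro p hp
    exact mul_le_mul_of_nonneg_left (hcall p.2) (hl p hp)
  have hb' := mul_le_mul_of_nonneg_left hEXY hb
  linarith

end Prob

end MCOaux

open MCOaux

/-- **Call characterization of the monotone convex order.**
For integrable real random variables `X, Y` on a probability space,
`E[c(X)] ≤ E[c(Y)]` for every nondecreasing convex `c : ℝ → ℝ` with `c ∘ X`, `c ∘ Y`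
integrable, if and only if `E[(X - K)⁺] ≤ E[(Y - K)⁺]` for every `K ∈ ℝ`. -/
theorem monotone_convex_order_iff_calls
    {Ω : Type*} [MeasureSpace Ω] [IsProbabilityMeasure (volume : Measure Ω)]
    (X Y : Ω → ℝ) (hX : Integrable X) (hY : Integrable Y) :
    (∀ c : ℝ → ℝ, Monotone c → ConvexOn ℝ univ c →
        Integrable (fun ω => c (X ω)) → Integrable (fun ω => c (Y ω)) →
        ∫ ω, c (X ω) ≤ ∫ ω, c (Y ω)) ↔
      (∀ K : ℝ, ∫ ω, max (X ω - K) 0 ≤ ∫ ω, max (Y ω - K) 0) := by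
  constructor
  · intro hc K
    have hmono : Monotone fun x : ℝ => max (x - K) 0 := by
      intro x y hxy
      exact max_le_max (by linarith) le_rfl
    have hconv : ConvexOn ℝ univ fun x : ℝ => max (x - K) 0 := by
      have h1 : ConvexOn ℝ univ fun x : ℝ => x - K := by
        refine ⟨convex_univ, fun x _ y _ a b ha hb hab => le_of_eq ?_⟩
        simp only [smul_eq_mul]
        linear_combination K * hab
      have h2 : ConvexOn ℝ univ fun _ : ℝ => (0:ℝ) := convexOn_const 0 convex_univ
      exact h1.sup h2
    exact hc _ hmono hconv (integrable_call hX K) (integrable_call hY K)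
  · intro hcall c hmono hconv hcX hcY
    -- Step 1: E[X] ≤ E[Y]
    have hsplit : ∀ (Z : Ω → ℝ), Integrable Z → ∀ K : ℝ,
        ∫ ω, max (Z ω - K) 0 = ((∫ ω, Z ω) - K) + ∫ ω, max (K - Z ω) 0 := by
      intro Z hZ K
      have h : (fun ω => max (Z ω - K) 0) = fun ω => (Z ω - K) + max (K - Z ω) 0 := by
        funext ω
        rcases le_total (Z ω) K with h | h
        · rw [max_eq_right (by linarith), max_eq_left (by linarith)]; ring
        · rw [max_eq_left (by linarith), max_eq_right (by linarith)]; ring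
      rw [h]
      have h2 : ∫ ω, (Z ω - K + max (K - Z ω) 0) =
          (∫ ω, (Z ω - K)) + ∫ ω, max (K - Z ω) 0 :=
        integral_add (hZ.sub (integrable_const K))
          (((integrable_const K).sub hZ).pos_part)
      have h3 : ∫ ω, (Z ω - K) = (∫ ω, Z ω) - (∫ _ω : Ω, K) :=
        integral_sub hZ (integrable_const K)
      rw [h2, h3, integral_const]
      simp
    have hδ : Tendsto (fun n : ℕ => ∫ ω, max (-(n:ℝ) - Y ω) 0) atTop (𝓝 0) := by
      have h := tendsto_integral_of_dominated_convergence
        (F := fun (n : ℕ) (ω : Ω) => max (-(n:ℝ) - Y ω) 0)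
        (f := fun _ : Ω => (0:ℝ)) (μ := volume)
        (fun ω => |Y ω|)
        (fun n => (((integrable_const (-(n:ℝ))).sub hY).pos_part).aestronglyMeasurable)
        hY.abs
        (fun n => Eventually.of_forall fun ω => by
          rw [Real.norm_eq_abs, abs_of_nonneg (le_max_right _ _)]
          apply max_le _ (abs_nonneg _)
          have hn : (0:ℝ) ≤ (n:ℝ) := Nat.cast_nonneg n
          have := neg_le_abs (Y ω)
          linarith)
        (Eventually.of_forall fun ω => by
          obtain ⟨N, hN⟩ := exists_nat_ge (-(Y ω))
          apply tendsto_atTop_of_eventually_const (i₀ := N)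
          intro n hn
          have hNn : (N:ℝ) ≤ (n:ℝ) := Nat.cast_le.mpr hn
          exact max_eq_right (by linarith))
      simpa using h
    have hEXY : ∫ ω, X ω ≤ ∫ ω, Y ω := by
      have hkey : ∀ n : ℕ, ∫ ω, X ω ≤ (∫ ω, Y ω) + ∫ ω, max (-(n:ℝ) - Y ω) 0 := by
        intro n
        have h1 : (∫ ω, X ω) - (-(n:ℝ)) ≤ ∫ ω, max (X ω - (-(n:ℝ))) 0 := by
          rw [hsplit X hX (-(n:ℝ))]
          have : 0 ≤ ∫ ω, max (-(n:ℝ) - X ω) 0 :=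
            integral_nonneg fun ω => le_max_right _ _
          linarith
        have h2 := hcall (-(n:ℝ))
        rw [hsplit Y hY (-(n:ℝ))] at h2
        linarith
      have h := ge_of_tendsto (tendsto_const_nhds.add hδ) (Eventually.of_forall hkey)
      simpa using h
    -- Step 2: subgradient machinery
    set σ : ℝ → ℝ := fun t => sInf ((fun u => (c u - c t) / (u - t)) '' Ioi t) with hσdef
    have hbdd : ∀ t, BddBelow ((fun u => (c u - c t) / (u - t)) '' Ioi t) := by
      intro t
      refine ⟨0, fun r hr => ?_⟩
      obtain ⟨u, hu, rfl⟩ := hr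
      have hu' : t < u := hu
      have := hmono hu'.le
      exact div_nonneg (by linarith) (by linarith)
    have hσ0 : ∀ t, 0 ≤ σ t := by
      intro t
      apply Real.sInf_nonneg
      rintro r ⟨u, hu, rfl⟩
      have hu' : t < u := hu
      have := hmono hu'.le
      exact div_nonneg (by linarith) (by linarith)
    have hσle : ∀ t u, t < u → σ t ≤ (c u - c t) / (u - t) := fun t u htu =>
      csInf_le (hbdd t) ⟨u, htu, rfl⟩
    have hline : ∀ t x, c t + σ t * (x - t) ≤ c x := by
      intro t x
      rcases lt_trichotomy x t with hxt | rfl | htx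
      · have hslope : (c t - c x) / (t - x) ≤ σ t := by
          apply le_csInf ⟨_, Set.mem_image_of_mem _ (mem_Ioi.mpr (lt_add_one t))⟩
          rintro r ⟨u, hu, rfl⟩
          have hu' : t < u := hu
          exact hconv.slope_mono_adjacent (mem_univ x) (mem_univ u) hxt hu'
        have htx0 : (0:ℝ) < t - x := by linarith
        have h1 : c t - c x ≤ σ t * (t - x) := by
          have := mul_le_mul_of_nonneg_right hslope htx0.le
          rwa [div_mul_cancel₀ _ (ne_of_gt htx0)] at this
        nlinarith
      · simp
      · have hxt0 : (0:ℝ) < x - t := by linarith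
        have h1 : σ t * (x - t) ≤ c x - c t := by
          have := mul_le_mul_of_nonneg_right (hσle t x htx) hxt0.le
          rwa [div_mul_cancel₀ _ (ne_of_gt hxt0)] at this
        linarith
    obtain ⟨e, he⟩ := exists_surjective_nat ℚ
    set Af : ℕ → ℝ := fun i => c (e i) - σ (e i) * (e i) with hAf
    set Bf : ℕ → ℝ := fun i => σ (e i) with hBf
    set g : ℕ → ℝ → ℝ := fun n x =>
      (Finset.range (n+1)).sup' Finset.nonempty_range_add_one (fun i => Af i + Bf i * x)
      with hgdef
    have hlineq : ∀ i x, Af i + Bf i * x = c (e i) + σ (e i) * (x - (e i : ℝ)) := by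
      intro i x; simp only [hAf, hBf]; ring
    have hgrep : ∀ n, Rep (g n)
        ((Finset.range (n+1)).sup' Finset.nonempty_range_add_one Bf) := fun n =>
      rep_sup' _ _ Af Bf (fun i _ => hσ0 _) _ (fun i hi => Finset.le_sup' Bf hi)
    have hgle : ∀ n x, g n x ≤ c x := by
      intro n x
      apply Finset.sup'_le
      intro i _
      rw [hlineq i x]
      exact hline (e i) x
    have hgmono : ∀ x, Monotone fun n => g n x := by
      intro x n m hnm
      exact Finset.sup'_mono (fun i => Af i + Bf i * x)
        (Finset.range_subset_range.mpr (by omega)) Finset.nonempty_range_add_one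
    have hgtend : ∀ x, Tendsto (fun n => g n x) atTop (𝓝 (c x)) := by
      intro x
      have hb : BddAbove (Set.range fun n => g n x) := by
        refine ⟨c x, ?_⟩
        rintro r ⟨n, rfl⟩
        exact hgle n x
      have htend := tendsto_atTop_ciSup (hgmono x) hb
      have hsup : ⨆ n, g n x = c x := by
        apply le_antisymm (ciSup_le fun n => hgle n x)
        by_contra hcon
        push_neg at hcon
        set ε := c x - ⨆ n, g n x with hε
        have hε0 : 0 < ε := by simp only [hε]; linarith
        set M := c (x + 2) - c x with hM
        have hM0 : 0 ≤ M := by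
          have := hmono (by linarith : x ≤ x + 2)
          simp only [hM]; linarith
        set δ := min 1 (ε / (M + 1)) with hδ
        have hδ0 : 0 < δ := lt_min one_pos (div_pos hε0 (by linarith))
        obtain ⟨q, hq1, hq2⟩ := exists_rat_btwn (by linarith : x < x + δ)
        obtain ⟨i, rfl⟩ := he q
        have hδ1 : δ ≤ 1 := min_le_left _ _
        have ht1 : (e i : ℝ) ≤ x + 1 := by linarith
        have hσub : σ (e i) ≤ M := by
          have h1 := hσle (e i) ((e i : ℝ) + 1) (by linarith)
          have h1' : σ (e i) ≤ c ((e i : ℝ) + 1) - c (e i) := by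
            simpa using h1
          have h2 := hmono (by linarith : ((e i : ℝ) + 1) ≤ x + 2)
          have h3 := hmono hq1.le
          simp only [hM]
          linarith
        have hgi : c (e i) + σ (e i) * (x - (e i : ℝ)) ≤ g i x := by
          rw [← hlineq i x]
          exact Finset.le_sup' (f := fun j => Af j + Bf j * x)
            (Finset.self_mem_range_succ i)
        have hcx : c x ≤ c (e i) := hmono hq1.le
        have hnn : 0 ≤ (e i : ℝ) - x := by linarith
        have h2 : σ (e i) * ((e i : ℝ) - x) ≤ M * δ :=
          mul_le_mul hσub (by linarith) hnn hM0
        have h3 : M * δ < ε := by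
          have hδ2 : δ ≤ ε / (M + 1) := min_le_right _ _
          have hMδ : M * δ ≤ M * (ε / (M + 1)) := mul_le_mul_of_nonneg_left hδ2 hM0
          have hr : (M + 1) * (ε / (M + 1)) = ε := by field_simp
          have hrp : 0 < ε / (M + 1) := div_pos hε0 (by linarith)
          nlinarith
        have hneg : σ (e i) * (x - (e i : ℝ)) = -(σ (e i) * ((e i : ℝ) - x)) := by ring
        have hfinal : c x - ε < g i x := by linarith
        have hle := le_ciSup hb i
        simp only [hε] at hfinal
        linarith
      rw [← hsup]
      exact htend
    have hTX := integral_tendsto_of_tendsto_of_monotone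
      (fun n => (hgrep n).integrable hX) hcX
      (ae_of_all _ fun ω => hgmono (X ω))
      (ae_of_all _ fun ω => hgtend (X ω))
    have hTY := integral_tendsto_of_tendsto_of_monotone
      (fun n => (hgrep n).integrable hY) hcY
      (ae_of_all _ fun ω => hgmono (Y ω))
      (ae_of_all _ fun ω => hgtend (Y ω))
    exact le_of_tendsto_of_tendsto' hTX hTY fun n =>
      rep_integral_le hX hY hEXY hcall (hgrep n)
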